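/- Fix w ∈ Sₙ and let v ↦ v' be the greedy operation associated to w. For every u ≤ w in Bruhat order there exists a (unique) permutation u_w ∈ Sₙ such that {v ∈ Sₙ : v' = u} = {x ∈ Sₙ : u ≤_R x ≤_R u_w}, i.e. the fiber of the operation over u is the right weak order interval [u, u_w]_R. -/

import Mathlib

namespace SchubertToric

open Equiv

/-- The number of inversions (= the length `ℓ`) of a permutation. -/
def invCount {n : ℕ} (w : Equiv.Perm (Fin n)) : ℕ :=
  ((Finset.univ : Finset (Fin n × Fin n)).filter fun p => p.1 < p.2 ∧ w p.2 < w p.1).card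

/-- `initSeg w d` is the set `{w(1), …, w(d)}` (0-indexed: images of the first `d` indices). -/
def initSeg {n : ℕ} (w : Equiv.Perm (Fin n)) (d : ℕ) : Finset (Fin n) :=
  (Finset.univ.filter fun i : Fin n => (i : ℕ) < d).image w

/-- `domLE S T`: the increasing rearrangement of `S` is componentwise ≤ that of `T`. -/
def domLE {n : ℕ} (S T : Finset (Fin n)) : Prop :=
  List.Forall₂ (· ≤ ·) (S.sort (· ≤ ·)) (T.sort (· ≤ ·))

/-- Bruhat order on `
Sₙ`, via the tableau criterion. -/
def bruhatLE {n : ℕ} (v w : Equiv.Perm (Fin n)) : Prop :=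
  ∀ d : ℕ, domLE (initSeg v d) (initSeg w d)

/-- `GreedyRel w v vp` says that `vp = v'`, the result of the greedy operation associated
to `w`: there is a sequence of indices `idx 0, idx 1, …`, each chosen as the *least* index
not previously chosen such that the increasing rearrangement of the previously chosen values
together with the new value is componentwise at most `{w(1),…,w(d)}`, and `vp d = v (idx d)`. -/
def GreedyRel {n : ℕ} (w v vp : Equiv.Perm (Fin n)) : Prop :=
  ∃ idx : Fin n → Fin n,
    (∀ d : Fin n, vp d = v (idx d)) ∧
    ∀ d : Fin n,
      IsLeast {i : Fin n |
        (∀ e : Fin n, e < d → idx e ≠ i) ∧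
        domLE (insert (v i)
            ((Finset.univ.filter fun e : Fin n => e < d).image fun e => v (idx e)))
          (initSeg w ((d : ℕ) + 1))}
        (idx d)

/-- Right weak order: `rightWeakLE u v` iff `v = u·s_{i₁}⋯s_{i_k}` with
`ℓ(u·s_{i₁}⋯s_{i_j}) = ℓ(u) + j` for all `0 ≤ j ≤ k`. -/
def rightWeakLE {n : ℕ} (u v : Equiv.Perm (Fin n)) : Prop :=
  ∃ L : List (Equiv.Perm (Fin n)),
    (∀ s ∈ L, ∃ (i : Fin n) (h : (i : ℕ) + 1 < n), s = Equiv.swap i ⟨(i : ℕ) + 1, h⟩) ∧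
    v = u * L.prod ∧
    ∀ k ≤ L.length, invCount (u * (L.take k).prod) = invCount u + k

/-- `Ref(w) = {(w(i),w(j)) : i < j, ℓ(w) − ℓ(t_{w(i),w(j)}·w) = 1}`. -/
def RefSet {n : ℕ} (w : Equiv.Perm (Fin n)) : Set (Fin n × Fin n) :=
  {p | ∃ i j : Fin n, i < j ∧ p = (w i, w j) ∧
    invCount (Equiv.swap (w i) (w j) * w) + 1 = invCount w}

/-- The (undirected) graph `Γ_w` on `Fin n` whose edges are the pairs in `Ref(w)`. -/
def refGraph {n : ℕ} (w : Equiv.Perm (Fin n)) : SimpleGraph (Fin n) :=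
  SimpleGraph.fromRel fun a b => (a, b) ∈ RefSet w

/-- The vertices of `Γ_w`: the integers occurring in pairs of `Ref(w)`. -/
def refVerts {n : ℕ} (w : Equiv.Perm (Fin n)) : Set (Fin n) :=
  {a | ∃ b, (a, b) ∈ RefSet w ∨ (b, a) ∈ RefSet w}

/-- The cone `C(v) = {x ∈ ℝⁿ : x_{v(1)} ≤ x_{v(2)} ≤ ⋯ ≤ x_{v(n)}}`. -/
def coneC {n : ℕ} (v : Equiv.Perm (Fin n)) : Set (Fin n → ℝ) :=
  {x | ∀ i j : Fin n, i ≤ j → x (v i) ≤ x (v j)}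

/-- `Ẽ_w(u) = {(u(i),u(j)) : i < j, t_{u(i),u(j)}·u ≤ w, |ℓ(u) − ℓ(t_{u(i),u(j)}·u)| = 1}`. -/
def Etil {n : ℕ} (w u : Equiv.Perm (Fin n)) : Set (Fin n × Fin n) :=
  {p | ∃ i j : Fin n, i < j ∧ p = (u i, u j) ∧
    bruhatLE (Equiv.swap (u i) (u j) * u) w ∧
    (invCount (Equiv.swap (u i) (u j) * u) + 1 = invCount u ∨
      invCount u + 1 = invCount (Equiv.swap (u i) (u j) * u))}

/-- An element `p = (a,b)` of `Ẽ_w(u)` is decomposable if it is a sum (under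
`(a,b)+(b,c) = (a,c)`) of two or more other elements of `Ẽ_w(u)`. -/
def Decomposable {n : ℕ} (w u : Equiv.Perm (Fin n)) (p : Fin n × Fin n) : Prop :=
  ∃ (m : ℕ) (c : ℕ → Fin n), 2 ≤ m ∧ c 0 = p.1 ∧ c m = p.2 ∧
    ∀ i < m, (c i, c (i + 1)) ∈ Etil w u ∧ (c i, c (i + 1)) ≠ p

/-- `E_w(u)`: the indecomposable elements of `Ẽ_w(u)`. -/
def Ew {n : ℕ} (w u : Equiv.Perm (Fin n)) : Set (Fin n × Fin n) :=
  {p | p ∈ Etil w u ∧ ¬ Decomposable w u p}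

/-- The longest element `w₀ = n(n−1)⋯21` of `Sₙ`. -/
def w0 {n : ℕ} : Equiv.Perm (Fin n) :=
  Function.Involutive.toPerm Fin.rev Fin.rev_rev


section Aux
open List

variable {n : ℕ}

theorem forall2_le_trans {L M N : List (Fin n)} (h1 : List.Forall₂ (· ≤ ·) L M)
    (h2 : List.Forall₂ (· ≤ ·) M N) : List.Forall₂ (· ≤ ·) L N := by
  induction h1 generalizing N with
  | nil => cases h2; exact .nil
  | cons h _ ih => cases h2 with
    | cons h' t' => exact .cons (le_trans h h') (ih t')

theorem forall2_cons_orderedInsert {y : Fin n} :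
    ∀ {M : List (Fin n)} {a : Fin n}, (a :: M).Pairwise (· ≤ ·) → a ≤ y →
      List.Forall₂ (· ≤ ·) (a :: M) (M.orderedInsert (· ≤ ·) y) := by
  intro M
  induction M with
  | nil => intro a _ hay; exact .cons hay .nil
  | cons b M' ih =>
    intro a hs hay
    rw [List.pairwise_cons] at hs
    by_cases hyb : y ≤ b
    · rw [List.orderedInsert, if_pos hyb]
      exact .cons hay (List.forall₂_refl _)
    · rw [List.orderedInsert, if_neg hyb]
      exact .cons (hs.1 b List.mem_cons_self) (ih hs.2 (le_of_not_ge hyb))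

theorem forall2_orderedInsert {x y : Fin n} (hxy : x ≤ y) :
    ∀ {M : List (Fin n)}, M.Pairwise (· ≤ ·) →
      List.Forall₂ (· ≤ ·) (M.orderedInsert (· ≤ ·) x) (M.orderedInsert (· ≤ ·) y) := by
  intro M
  induction M with
  | nil => intro _; exact .cons hxy .nil
  | cons a M' ih =>
    intro hs
    by_cases hxa : x ≤ a
    · rw [List.orderedInsert, if_pos hxa]
      by_cases hya : y ≤ a
      · rw [List.orderedInsert, if_pos hya]
        exact .cons hxy (List.forall₂_refl _)
      · rw [List.orderedInsert, if_neg hya]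
        exact .cons hxa (forall2_cons_orderedInsert hs (le_of_not_ge hya))
    · rw [List.orderedInsert, if_neg hxa, List.orderedInsert,
        if_neg (fun hya => hxa (le_trans hxy hya))]
      rw [List.pairwise_cons] at hs
      exact .cons (le_refl a) (ih hs.2)

theorem sort_insert_eq {S : Finset (Fin n)} {x : Fin n} (hx : x ∉ S) :
    (insert x S).sort (· ≤ ·) = (S.sort (· ≤ ·)).orderedInsert (· ≤ ·) x := by
  have hperm : (insert x S).sort (· ≤ ·) ~ x :: S.sort (· ≤ ·) := by
    rw [← Multiset.coe_eq_coe]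
    show ((Finset.sort (insert x S) (· ≤ ·) : List (Fin n)) : Multiset (Fin n)) = _
    rw [Finset.sort_eq, ← Multiset.cons_coe, Finset.sort_eq, Finset.insert_val,
      Multiset.ndinsert_of_notMem hx]
  exact List.Perm.eq_of_pairwise'
    (Finset.pairwise_sort _ _) (List.Pairwise.orderedInsert _ _ (Finset.pairwise_sort S _))
    (hperm.trans (List.perm_orderedInsert _ _ _).symm)

/-- D1: replace an element by a smaller one. -/
theorem domLE_insert_of_le {S T : Finset (Fin n)} {x y : Fin n} (hxy : x ≤ y)
    (hxS : x ∉ S) (hyS : y ∉ S) (h : domLE (insert y S) T) : domLE (insert x S) T := by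
  unfold domLE at *
  rw [sort_insert_eq hxS]
  rw [sort_insert_eq hyS] at h
  exact forall2_le_trans (forall2_orderedInsert hxy (Finset.pairwise_sort S _)) h

theorem mem_initSeg {w : Equiv.Perm (Fin n)} {d : ℕ} {a : Fin n} :
    a ∈ initSeg w d ↔ (w.symm a : ℕ) < d := by
  simp only [initSeg, Finset.mem_image, Finset.mem_filter, Finset.mem_univ, true_and]
  constructor
  · rintro ⟨i, hi, rfl⟩; simpa using hi
  · intro h; exact ⟨w.symm a, h, w.apply_symm_apply a⟩

theorem initSeg_succ {w : Equiv.Perm (Fin n)} {d : Fin n} :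
    initSeg w ((d : ℕ) + 1) = insert (w d) (initSeg w (d : ℕ)) := by
  ext a
  simp only [mem_initSeg, Finset.mem_insert]
  constructor
  · intro h
    rcases lt_or_eq_of_le (Nat.lt_succ_iff.mp h) with h' | h'
    · exact Or.inr h'
    · left
      have : w.symm a = d := Fin.ext h'
      rw [← this, w.apply_symm_apply]
  · rintro (rfl | h)
    · simp
    · omega

theorem self_not_mem_initSeg {w : Equiv.Perm (Fin n)} {d : Fin n} :
    w d ∉ initSeg w (d : ℕ) := by simp [mem_initSeg]

/-- the precedence relation `P b a` : `b = u(d)` must come before `a` in any fiber element. -/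
def Prel (w u : Equiv.Perm (Fin n)) (b a : Fin n) : Prop :=
  u.symm b < u.symm a ∧
    domLE (insert a (initSeg u (u.symm b : ℕ))) (initSeg w ((u.symm b : ℕ) + 1))

section PrelSec
variable {w u : Equiv.Perm (Fin n)}

theorem tg_pos {b a : Fin n} (h : Relation.TransGen (Prel w u) b a) :
    u.symm b < u.symm a := by
  induction h with
  | single h => exact h.1
  | tail _ h ih => exact lt_trans ih h.1

theorem tg_irrefl (a : Fin n) : ¬ Relation.TransGen (Prel w u) a a :=
  fun h => lt_irrefl _ (tg_pos h)

/-- single-step construction: if `x < y` sits later (in u) than `y`, then `Prel y x`. -/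
theorem Prel_of_lt (hu : bruhatLE u w) {x y : Fin n} (hxy : x < y)
    (hpos : u.symm y < u.symm x) : Prel w u y x := by
  refine ⟨hpos, ?_⟩
  have h1 := hu ((u.symm y : ℕ) + 1)
  have h2 : initSeg u ((u.symm y : ℕ) + 1) = insert y (initSeg u (u.symm y : ℕ)) := by
    have := initSeg_succ (w := u) (d := u.symm y)
    rwa [u.apply_symm_apply] at this
  rw [h2] at h1
  refine domLE_insert_of_le (le_of_lt hxy) ?_ ?_ h1
  · rw [mem_initSeg]; omega
  · have := self_not_mem_initSeg (w := u) (d := u.symm y)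
    rwa [u.apply_symm_apply] at this

/-- value monotonicity. -/
theorem Prel_of_le {b y z : Fin n} (h : Prel w u b z) (hyz : y ≤ z)
    (hy : u.symm b < u.symm y) : Prel w u b y := by
  refine ⟨hy, domLE_insert_of_le hyz ?_ ?_ h.2⟩
  · rw [mem_initSeg]; omega
  · rw [mem_initSeg]; have := h.1; omega

/-- KEY LEMMA: for `x<y<z`, `x ≺ z → x ≺ y ∨ y ≺ z`. -/
theorem key_lemma (hu : bruhatLE u w) {z : Fin n} :
    ∀ {x : Fin n}, Relation.TransGen (Prel w u) x z →
      ∀ {y : Fin n}, x < y → y < z →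
        Relation.TransGen (Prel w u) x y ∨ Relation.TransGen (Prel w u) y z := by
  intro x h
  induction h using Relation.TransGen.head_induction_on with
  | @single x h =>
    intro y hxy hyz
    rcases lt_trichotomy (u.symm x) (u.symm y) with hp | hp | hp
    · exact Or.inl (Relation.TransGen.single (Prel_of_le h (le_of_lt hyz) hp))
    · exact absurd (u.symm.injective (Fin.ext (congrArg Fin.val hp))) (ne_of_lt hxy)
    · exact Or.inr (Relation.TransGen.trans
        (Relation.TransGen.single (Prel_of_lt hu hxy hp)) (Relation.TransGen.single h))
  | @head x c hxc hcz ih =>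
    intro y hxy hyz
    rcases lt_trichotomy y c with hyc | rfl | hcy
    · rcases lt_trichotomy (u.symm x) (u.symm y) with hp | hp | hp
      · exact Or.inl (Relation.TransGen.single (Prel_of_le hxc (le_of_lt hyc) hp))
      · exact absurd (u.symm.injective (Fin.ext (congrArg Fin.val hp))) (ne_of_lt hxy)
      · exact Or.inr (Relation.TransGen.trans
          (Relation.TransGen.single (Prel_of_lt hu hxy hp))
          (Relation.TransGen.head hxc hcz))
    · exact Or.inl (Relation.TransGen.single hxc)
    · rcases ih hcy hyz with h' | h'
      · exact Or.inl (Relation.TransGen.head hxc h')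
      · exact Or.inr h'

end PrelSec

def TGr (w u : Equiv.Perm (Fin n)) (x y : Fin n) : Prop :=
  Relation.TransGen (Prel w u) x y

def ltp (w u : Equiv.Perm (Fin n)) (x y : Fin n) : Prop :=
  TGr w u x y ∨ (¬ TGr w u x y ∧ ¬ TGr w u y x ∧ y < x)

section LtpSec
variable {w u : Equiv.Perm (Fin n)}

theorem tg_trans {a b c : Fin n} (h1 : TGr w u a b) (h2 : TGr w u b c) : TGr w u a c :=
  Relation.TransGen.trans h1 h2

theorem ltp_irrefl (a : Fin n) : ¬ ltp w u a a := by
  rintro (h | ⟨_, _, h⟩)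
  · exact tg_irrefl a h
  · exact lt_irrefl _ h

theorem ltp_total {a b : Fin n} (hab : a ≠ b) : ltp w u a b ∨ ltp w u b a := by
  by_cases h1 : TGr w u a b
  · exact Or.inl (Or.inl h1)
  by_cases h2 : TGr w u b a
  · exact Or.inr (Or.inl h2)
  rcases lt_or_gt_of_ne hab with h | h
  · exact Or.inr (Or.inr ⟨h2, h1, h⟩)
  · exact Or.inl (Or.inr ⟨h1, h2, h⟩)

theorem cycle3 (hu : bruhatLE u w) {a b c : Fin n}
    (h1 : ltp w u a b) (h2 : ltp w u b c) (h3 : ltp w u c a) : False := by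
  rcases h1 with t1 | ⟨n1, n1', o1⟩ <;> rcases h2 with t2 | ⟨n2, n2', o2⟩ <;>
    rcases h3 with t3 | ⟨n3, n3', o3⟩
  · exact tg_irrefl a (tg_trans (tg_trans t1 t2) t3)
  · exact n3' (tg_trans t1 t2)
  · exact n2' (tg_trans t3 t1)
  · rcases key_lemma hu t1 o3 o2 with h | h
    · exact n3' h
    · exact n2' h
  · exact n1' (tg_trans t2 t3)
  · rcases key_lemma hu t2 o1 o3 with h | h
    · exact n1' h
    · exact n3' h
  · rcases key_lemma hu t3 o2 o1 with h | h
    · exact n2' h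
    · exact n1' h
  · exact absurd (lt_trans (lt_trans o3 o2) o1) (lt_irrefl a)

theorem ltp_asymm {a b : Fin n} (h1 : ltp w u a b) (h2 : ltp w u b a) : False := by
  rcases h1 with t1 | ⟨n1, n1', o1⟩ <;> rcases h2 with t2 | ⟨n2, n2', o2⟩
  · exact tg_irrefl a (tg_trans t1 t2)
  · exact n2' t1
  · exact n1' t2
  · exact (lt_asymm o1) o2

theorem ltp_trans (hu : bruhatLE u w) {a b c : Fin n}
    (h1 : ltp w u a b) (h2 : ltp w u b c) : ltp w u a c := by
  rcases eq_or_ne a c with rfl | hac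
  · exact (ltp_asymm h1 h2).elim
  rcases ltp_total hac with h | h
  · exact h
  · exact (cycle3 hu h1 h2 h).elim

end LtpSec

open Classical in
noncomputable def gfun (w u : Equiv.Perm (Fin n)) (a : Fin n) : Fin n :=
  ⟨(Finset.univ.filter fun b => ltp w u b a).card, by
    rcases n.eq_zero_or_pos with rfl | hn
    · exact absurd a.2 (by omega)
    calc (Finset.univ.filter fun b => ltp w u b a).card
        ≤ (Finset.univ.erase a).card := by
          apply Finset.card_le_card
          intro b hb
          simp only [Finset.mem_filter, Finset.mem_univ, true_and] at hb
          exact Finset.mem_erase.mpr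
            ⟨fun h => ltp_irrefl (w := w) (u := u) a (h ▸ hb), Finset.mem_univ b⟩
      _ < n := by rw [Finset.card_erase_of_mem (Finset.mem_univ a), Finset.card_univ,
          Fintype.card_fin]; omega⟩

section UwSec
variable {w u : Equiv.Perm (Fin n)}

theorem gfun_lt (hu : bruhatLE u w) {a b : Fin n} (h : ltp w u a b) :
    gfun w u a < gfun w u b := by
  classical
  have hsub : (Finset.univ.filter fun x => ltp w u x a) ⊂
      (Finset.univ.filter fun x => ltp w u x b) := by
    constructor
    · intro x hx
      simp only [Finset.mem_filter, Finset.mem_univ, true_and] at hx ⊢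
      exact ltp_trans hu hx h
    · intro hcon
      have ha : a ∈ (Finset.univ.filter fun x => ltp w u x b) := by
        simp only [Finset.mem_filter, Finset.mem_univ, true_and]; exact h
      have := hcon ha
      simp only [Finset.mem_filter, Finset.mem_univ, true_and] at this
      exact ltp_irrefl a this
  have := Finset.card_lt_card hsub
  simp only [gfun, Fin.lt_def]
  convert this using 2 <;> exact Subsingleton.elim _ _

theorem exists_uw (hu : bruhatLE u w) :
    ∃ uw : Equiv.Perm (Fin n), ∀ a b : Fin n,
      (uw.symm a < uw.symm b ↔ ltp w u a b) := by
  have hinj : Function.Injective (gfun w u) := by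
    intro a b hab
    by_contra hne
    rcases ltp_total (w := w) (u := u) hne with h | h
    · exact absurd hab (ne_of_lt (gfun_lt hu h))
    · exact absurd hab.symm (ne_of_lt (gfun_lt hu h))
  have hbij : Function.Bijective (gfun w u) := Finite.injective_iff_bijective.mp hinj
  refine ⟨(Equiv.ofBijective _ hbij).symm, fun a b => ?_⟩
  simp only [Equiv.symm_symm, Equiv.ofBijective_apply]
  constructor
  · intro h
    rcases eq_or_ne a b with rfl | hne
    · exact absurd h (lt_irrefl _)
    rcases ltp_total (w := w) (u := u) hne with h' | h'
    · exact h'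
    · exact absurd h (not_lt_of_gt (gfun_lt hu h'))
  · exact gfun_lt hu

end UwSec
end Aux


section GreedyChar
variable {n : ℕ} {w u v : Equiv.Perm (Fin n)}

theorem image_idx_eq {d : Fin n} {idx : Fin n → Fin n}
    (hidx : ∀ e : Fin n, e < d → v (idx e) = u e) :
    ((Finset.univ.filter fun e : Fin n => e < d).image fun e => v (idx e))
      = initSeg u (d : ℕ) := by
  rw [initSeg]
  have h1 : (Finset.univ.filter fun i : Fin n => (i : ℕ) < (d : ℕ))
      = (Finset.univ.filter fun e : Fin n => e < d) := by
    apply Finset.filter_congr; intro x _; exact Iff.rfl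
  rw [h1]
  apply Finset.image_congr
  intro e he
  simp only [Finset.coe_filter, Set.mem_setOf_eq] at he
  exact hidx e he.2

/-- `Fcond` : the pairwise characterization of the fiber. -/
def Fcond (w u v : Equiv.Perm (Fin n)) : Prop :=
  ∀ b a : Fin n, Prel w u b a → v.symm b < v.symm a

theorem greedy_iff_Fcond (hu : bruhatLE u w) :
    GreedyRel w v u ↔ Fcond w u v := by
  constructor
  · rintro ⟨idx, happ, hleast⟩ b a ⟨hpos, hdom⟩
    have hidx : ∀ e : Fin n, idx e = v.symm (u e) := by
      intro e; rw [happ e, Equiv.symm_apply_apply]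
    set d : Fin n := u.symm b with hd
    have hb : u d = b := u.apply_symm_apply b
    have hmem : (∀ e : Fin n, e < d → idx e ≠ v.symm a) ∧
        domLE (insert (v (v.symm a))
          ((Finset.univ.filter fun e : Fin n => e < d).image fun e => v (idx e)))
          (initSeg w ((d : ℕ) + 1)) := by
      constructor
      · intro e hed heq
        rw [hidx e] at heq
        have : u e = a := v.symm.injective heq
        have : e = u.symm a := by rw [← this, Equiv.symm_apply_apply]
        rw [this] at hed
        exact absurd (lt_trans hed hpos) (lt_irrefl _)
      · rw [Equiv.apply_symm_apply,
          image_idx_eq (fun e _ => (happ e).symm)]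
        exact hdom
    have hle := (hleast d).2 hmem
    rw [hidx d, hb] at hle
    have hne : v.symm b ≠ v.symm a := by
      intro h
      have hba : b = a := v.symm.injective h
      rw [hd, hba] at hpos
      exact lt_irrefl _ hpos
    exact lt_of_le_of_ne hle hne
  · intro hC
    refine ⟨fun d => v.symm (u d), fun d => (v.apply_symm_apply (u d)).symm, fun d => ?_⟩
    constructor
    · constructor
      · intro e hed heq
        have : e = d := u.injective (v.symm.injective heq)
        exact absurd (this ▸ hed) (lt_irrefl _)
      · rw [Equiv.apply_symm_apply,
          image_idx_eq (fun e _ => v.apply_symm_apply (u e)),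
          ← initSeg_succ]
        exact hu ((d : ℕ) + 1)
    · rintro i ⟨hunused, hdom⟩
      rcases eq_or_ne i (v.symm (u d)) with rfl | hne
      · exact le_refl _
      set a : Fin n := v i with ha
      have hau : ∀ e : Fin n, e ≤ d → a ≠ u e := by
        intro e hed heq
        have hi : i = v.symm (u e) := by rw [← heq, ha, Equiv.symm_apply_apply]
        rcases lt_or_eq_of_le hed with hlt | heq2
        · exact hunused e hlt hi.symm
        · rw [heq2] at hi; exact hne hi
      have hpos : d < u.symm a := by
        rcases lt_trichotomy (u.symm a) d with h | h | h
        · exact absurd (u.apply_symm_apply a).symm (hau (u.symm a) (le_of_lt h))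
        · exact absurd (u.apply_symm_apply a).symm (hau (u.symm a) (le_of_eq h))
        · exact h
      have hP : Prel w u (u d) a := by
        refine ⟨by rwa [Equiv.symm_apply_apply], ?_⟩
        rw [Equiv.symm_apply_apply]
        rw [image_idx_eq (fun e _ => v.apply_symm_apply (u e))] at hdom
        exact hdom
      have := hC (u d) a hP
      rw [Equiv.symm_apply_apply] at this
      exact le_of_lt this

theorem Fcond_self (hu : bruhatLE u w) : Fcond w u u := fun _ _ h => h.1

theorem Fcond_tg (hC : Fcond w u v) {b a : Fin n} (h : TGr w u b a) :
    v.symm b < v.symm a := by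
  induction h with
  | single h => exact hC _ _ h
  | tail _ h ih => exact lt_trans ih (hC _ _ h)

end GreedyChar


section WeakOrder
variable {n : ℕ}

def invPairs (x : Equiv.Perm (Fin n)) : Finset (Fin n × Fin n) :=
  Finset.univ.filter fun p => p.1 < p.2 ∧ x.symm p.2 < x.symm p.1

theorem mem_invPairs {x : Equiv.Perm (Fin n)} {p : Fin n × Fin n} :
    p ∈ invPairs x ↔ p.1 < p.2 ∧ x.symm p.2 < x.symm p.1 := by
  simp [invPairs]

theorem invCount_eq_card_invPairs (x : Equiv.Perm (Fin n)) :
    invCount x = (invPairs x).card := by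
  refine Finset.card_bij' (fun p _ => (x p.2, x p.1)) (fun q _ => (x.symm q.2, x.symm q.1))
    ?_ ?_ ?_ ?_
  · intro p hp
    simp only [Finset.mem_filter, Finset.mem_univ, true_and] at hp
    simp only [mem_invPairs, Equiv.symm_apply_apply]
    exact ⟨hp.2, hp.1⟩
  · intro q hq
    simp only [mem_invPairs] at hq
    simp only [Finset.mem_filter, Finset.mem_univ, true_and, Equiv.apply_symm_apply]
    exact ⟨hq.2, hq.1⟩
  · intro p hp; simp
  · intro q hq; simp

section Swap
variable {x : Equiv.Perm (Fin n)} {k : ℕ} (hk : k + 1 < n)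

theorem swap_preserves_lt {j j' p q : Fin n} (hj : (j : ℕ) + 1 = (j' : ℕ))
    (hne1 : ¬(p = j ∧ q = j')) (hne2 : ¬(p = j' ∧ q = j)) :
    Equiv.swap j j' p < Equiv.swap j j' q ↔ p < q := by
  simp only [Equiv.swap_apply_def]
  rw [Fin.lt_def, Fin.lt_def]
  have hne1' : ¬((p : ℕ) = (j : ℕ) ∧ (q : ℕ) = (j' : ℕ)) := by
    rw [← Fin.ext_iff, ← Fin.ext_iff]; exact hne1
  have hne2' : ¬((p : ℕ) = (j' : ℕ) ∧ (q : ℕ) = (j : ℕ)) := by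
    rw [← Fin.ext_iff, ← Fin.ext_iff]; exact hne2
  clear hne1 hne2
  split_ifs <;> omega

end Swap

theorem mul_swap_symm_apply {x : Equiv.Perm (Fin n)} {j j' q : Fin n} :
    (x * Equiv.swap j j').symm q = Equiv.swap j j' (x.symm q) := by
  rw [Equiv.symm_apply_eq, Equiv.Perm.mul_apply, Equiv.swap_apply_self,
    Equiv.apply_symm_apply]

theorem invPairs_mul_swap {x : Equiv.Perm (Fin n)} {j j' : Fin n}
    (hj : (j : ℕ) + 1 = (j' : ℕ)) (hx : x j < x j') :
    invPairs (x * Equiv.swap j j') = insert (x j, x j') (invPairs x) := by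
  ext ⟨a, b⟩
  rw [mem_invPairs, Finset.mem_insert, mem_invPairs]
  have hsymm : ∀ q, (x * Equiv.swap j j').symm q = Equiv.swap j j' (x.symm q) :=
    fun q => mul_swap_symm_apply
  constructor
  · rintro ⟨hab, hlt⟩
    rw [hsymm, hsymm] at hlt
    by_cases heq : (a, b) = (x j, x j')
    · exact Or.inl heq
    · right
      refine ⟨hab, ?_⟩
      rw [swap_preserves_lt hj ?_ ?_] at hlt
      · exact hlt
      · rintro ⟨h1, h2⟩
        have hb : b = x j := by rw [← h1, Equiv.apply_symm_apply]
        have ha : a = x j' := by rw [← h2, Equiv.apply_symm_apply]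
        rw [ha, hb] at hab
        exact absurd (lt_trans hab hx) (lt_irrefl _)
      · rintro ⟨h1, h2⟩
        exact heq (by
          rw [Prod.mk.injEq]
          exact ⟨by rw [← h2, Equiv.apply_symm_apply],
            by rw [← h1, Equiv.apply_symm_apply]⟩)
  · rintro (heq | ⟨hab, hlt⟩)
    · rw [Prod.ext_iff] at heq
      obtain ⟨ha, hb⟩ := heq
      dsimp only at ha hb
      subst ha; subst hb
      refine ⟨hx, ?_⟩
      rw [hsymm, hsymm, Equiv.symm_apply_apply, Equiv.symm_apply_apply,
        Equiv.swap_apply_left, Equiv.swap_apply_right, Fin.lt_def]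
      omega
    · refine ⟨hab, ?_⟩
      rw [hsymm, hsymm, swap_preserves_lt hj ?_ ?_]
      · exact hlt
      · rintro ⟨h1, h2⟩
        have hb : b = x j := by rw [← h1, Equiv.apply_symm_apply]
        have ha : a = x j' := by rw [← h2, Equiv.apply_symm_apply]
        rw [ha, hb] at hab
        exact absurd (lt_trans hab hx) (lt_irrefl _)
      · rintro ⟨h1, h2⟩
        rw [h1, h2, Fin.lt_def] at hlt
        omega

theorem swap_pair_not_mem_invPairs {x : Equiv.Perm (Fin n)} {j j' : Fin n}
    (hj : (j : ℕ) + 1 = (j' : ℕ)) :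
    (x j, x j') ∉ invPairs x := by
  rw [mem_invPairs]
  rintro ⟨-, h⟩
  simp only [Equiv.symm_apply_apply] at h
  rw [Fin.lt_def] at h; omega

theorem invCount_mul_swap {x : Equiv.Perm (Fin n)} {j j' : Fin n}
    (hj : (j : ℕ) + 1 = (j' : ℕ)) (hx : x j < x j') :
    invCount (x * Equiv.swap j j') = invCount x + 1 := by
  rw [invCount_eq_card_invPairs, invCount_eq_card_invPairs, invPairs_mul_swap hj hx,
    Finset.card_insert_of_notMem (swap_pair_not_mem_invPairs hj)]

theorem invCount_mul_swap' {x : Equiv.Perm (Fin n)} {j j' : Fin n}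
    (hj : (j : ℕ) + 1 = (j' : ℕ)) (hx : x j' < x j) :
    invCount x = invCount (x * Equiv.swap j j') + 1 := by
  set y := x * Equiv.swap j j' with hy
  have h1 : y j = x j' := by rw [hy, Equiv.Perm.mul_apply, Equiv.swap_apply_left]
  have h2 : y j' = x j := by rw [hy, Equiv.Perm.mul_apply, Equiv.swap_apply_right]
  have h3 : y * Equiv.swap j j' = x := by
    rw [hy, mul_assoc, Equiv.swap_mul_self, mul_one]
  have := invCount_mul_swap (x := y) hj (by rw [h1, h2]; exact hx)
  rw [h3] at this
  omega

theorem strictMono_equiv_fin_eq_id {e : Equiv.Perm (Fin n)}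
    (he : StrictMono e) : ∀ p, e p = p := by
  have hsymm : StrictMono e.symm := by
    intro a b hab
    rcases lt_trichotomy (e.symm a) (e.symm b) with h | h | h
    · exact h
    · exact absurd (congrArg e h) (by
        rw [Equiv.apply_symm_apply, Equiv.apply_symm_apply]; exact ne_of_lt hab)
    · have := he h
      rw [Equiv.apply_symm_apply, Equiv.apply_symm_apply] at this
      exact absurd hab (lt_asymm this)
  have key : ∀ (f : Equiv.Perm (Fin n)), StrictMono f → ∀ p : Fin n, p ≤ f p := by
    intro f hf p
    by_contra hcon
    push_neg at hcon
    have hmaps : ∀ q : Fin n, q ≤ p → f q < p := by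
      intro q hq
      rcases lt_or_eq_of_le hq with h | rfl
      · exact lt_trans (hf h) hcon
      · exact hcon
    have hinj : Set.InjOn f (Finset.Iic p) := fun a _ b _ hab => hf.injective hab
    have hcard := Finset.card_le_card_of_injOn f
      (fun q hq => by
        exact Finset.mem_coe.mpr (Finset.mem_Iio.mpr
          (hmaps q (Finset.mem_Iic.mp (Finset.mem_coe.mp hq))))) hinj
    rw [Fin.card_Iic, Fin.card_Iio] at hcard
    omega
  intro p
  have h1 := key e he p
  have h2 := key e.symm hsymm (e p)
  rw [Equiv.symm_apply_apply] at h2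
  exact le_antisymm h2 h1

theorem strictMono_of_adjacent {f : Fin n → Fin n}
    (h : ∀ (k : ℕ) (hk : k + 1 < n), f ⟨k, by omega⟩ < f ⟨k + 1, hk⟩) :
    StrictMono f := by
  have key : ∀ (m : ℕ) (hm : m < n) (p : Fin n), (p : ℕ) < m → f p < f ⟨m, hm⟩ := by
    intro m
    induction m with
    | zero => intro _ p hp; omega
    | succ m ih =>
      intro hm p hp
      rcases Nat.lt_or_ge (p : ℕ) m with h' | h'
      · have hmn : m < n := by omega
        refine lt_trans (ih hmn p h') ?_
        have := h m hm
        convert this using 2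
      · have : (p : ℕ) = m := by omega
        have hpe : p = ⟨m, by omega⟩ := Fin.ext this
        rw [hpe]
        exact h m hm
  intro p q hpq
  have h' := key (q : ℕ) q.2 p hpq
  have hq : (⟨(q : ℕ), q.2⟩ : Fin n) = q := rfl
  rwa [hq] at h'

/-- if the inversion pairs agree, the permutations agree -/
theorem eq_of_invPairs_subset_of_subset {u v : Equiv.Perm (Fin n)}
    (h1 : invPairs u ⊆ invPairs v) (h2 : invPairs v ⊆ invPairs u) : u = v := by
  have hf : StrictMono (fun p => v.symm (u p)) := by
    intro p q hpq
    rcases lt_trichotomy (u p) (u q) with h | h | h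
    · by_contra hcon
      push_neg at hcon
      rcases lt_or_eq_of_le hcon with hlt | heq
      · have hmem : (u p, u q) ∈ invPairs v := mem_invPairs.mpr ⟨h, hlt⟩
        have := (mem_invPairs.mp (h2 hmem)).2
        rw [Equiv.symm_apply_apply, Equiv.symm_apply_apply] at this
        exact absurd hpq (lt_asymm this)
      · exact absurd (v.symm.injective heq.symm) (by
          intro hh; exact absurd (u.injective hh) (ne_of_lt hpq))
    · exact absurd (u.injective h) (ne_of_lt hpq)
    · have hmem : (u q, u p) ∈ invPairs u := by
        rw [mem_invPairs]
        refine ⟨h, ?_⟩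
        rw [Equiv.symm_apply_apply, Equiv.symm_apply_apply]
        exact hpq
      exact (mem_invPairs.mp (h1 hmem)).2
  have := strictMono_equiv_fin_eq_id (e := u.trans v.symm) hf
  apply Equiv.ext
  intro p
  have hp := this p
  simp only [Equiv.trans_apply] at hp
  calc u p = v (v.symm (u p)) := (v.apply_symm_apply _).symm
    _ = v p := by rw [hp]

theorem exists_descent {u v : Equiv.Perm (Fin n)} (h : invPairs u ⊆ invPairs v)
    (hne : u ≠ v) :
    ∃ (k : ℕ) (hk : k + 1 < n), v.symm (u ⟨k + 1, hk⟩) < v.symm (u ⟨k, by omega⟩) := by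
  by_contra hcon
  push_neg at hcon
  have hadj : ∀ (k : ℕ) (hk : k + 1 < n),
      v.symm (u ⟨k, by omega⟩) < v.symm (u ⟨k + 1, hk⟩) := by
    intro k hk
    rcases lt_trichotomy (v.symm (u ⟨k, by omega⟩)) (v.symm (u ⟨k + 1, hk⟩)) with h' | h' | h'
    · exact h'
    · exfalso
      have h2 : k = k + 1 := by
        simpa using congrArg Fin.val (u.injective (v.symm.injective h'))
      omega
    · exact absurd h' (not_lt.mpr (hcon k hk))
  have hmono : StrictMono (fun p => v.symm (u p)) := strictMono_of_adjacent hadj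
  have := strictMono_equiv_fin_eq_id (e := u.trans v.symm) hmono
  refine hne (Equiv.ext fun p => ?_)
  have hp := this p
  simp only [Equiv.trans_apply] at hp
  calc u p = v (v.symm (u p)) := (v.apply_symm_apply _).symm
    _ = v p := by rw [hp]

theorem rightWeakLE_of_subset {v : Equiv.Perm (Fin n)} :
    ∀ (d : ℕ) (u : Equiv.Perm (Fin n)), invPairs u ⊆ invPairs v →
      (invPairs v).card ≤ (invPairs u).card + d → rightWeakLE u v := by
  intro d
  induction d with
  | zero =>
    intro u hsub hcard
    have : invPairs u = invPairs v := Finset.eq_of_subset_of_card_le hsub (by omega)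
    have huv : u = v := eq_of_invPairs_subset_of_subset hsub (this ▸ Finset.Subset.refl _)
    subst huv
    exact ⟨[], by simp, by simp, by
      intro k hk
      simp only [List.length_nil, Nat.le_zero] at hk
      subst hk
      simp⟩
  | succ d ih =>
    intro u hsub hcard
    rcases eq_or_ne u v with rfl | hne
    · exact ⟨[], by simp, by simp, by
        intro k hk
        simp only [List.length_nil, Nat.le_zero] at hk
        subst hk
        simp⟩
    obtain ⟨k, hk, hdesc⟩ := exists_descent hsub hne
    set j : Fin n := ⟨k, by omega⟩ with hjdef
    set j' : Fin n := ⟨k + 1, hk⟩ with hj'def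
    have hj : (j : ℕ) + 1 = (j' : ℕ) := rfl
    have hab : u j < u j' := by
      rcases lt_trichotomy (u j) (u j') with h' | h' | h'
      · exact h'
      · exfalso
        have := congrArg Fin.val (u.injective h')
        simp only [hjdef, hj'def] at this
        omega
      · exfalso
        have hmem : (u j', u j) ∈ invPairs u := by
          rw [mem_invPairs]
          refine ⟨h', ?_⟩
          show u.symm (u j) < u.symm (u j')
          rw [Equiv.symm_apply_apply, Equiv.symm_apply_apply, Fin.lt_def]
          omega
        have h3 := (mem_invPairs.mp (hsub hmem)).2
        have h4 : v.symm (u j) < v.symm (u j') := h3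
        exact absurd hdesc (lt_asymm h4)
    set u₂ := u * Equiv.swap j j' with hu2
    have hpairs : invPairs u₂ = insert (u j, u j') (invPairs u) := invPairs_mul_swap hj hab
    have hnotmem : (u j, u j') ∉ invPairs u := swap_pair_not_mem_invPairs hj
    have hmemv : (u j, u j') ∈ invPairs v := mem_invPairs.mpr ⟨hab, hdesc⟩
    have hsub2 : invPairs u₂ ⊆ invPairs v := by
      rw [hpairs]
      exact Finset.insert_subset hmemv hsub
    have hcard2 : (invPairs v).card ≤ (invPairs u₂).card + d := by
      rw [hpairs, Finset.card_insert_of_notMem hnotmem]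
      omega
    obtain ⟨L, hform, hprod, hcount⟩ := ih u₂ hsub2 hcard2
    have hcnt : invCount u₂ = invCount u + 1 := invCount_mul_swap hj hab
    refine ⟨Equiv.swap j j' :: L, ?_, ?_, ?_⟩
    · intro s hs
      rcases List.mem_cons.mp hs with rfl | hs
      · exact ⟨j, hk, rfl⟩
      · exact hform s hs
    · rw [List.prod_cons, ← mul_assoc, ← hu2, hprod]
    · intro m hm
      cases m with
      | zero => simp
      | succ m =>
        have hm' : m ≤ L.length := by simpa using hm
        have h5 := hcount m hm'
        rw [List.take_succ_cons, List.prod_cons, ← mul_assoc, ← hu2]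
        omega

theorem subset_of_rightWeakLE {u v : Equiv.Perm (Fin n)} (h : rightWeakLE u v) :
    invPairs u ⊆ invPairs v := by
  obtain ⟨L, hform, hprod, hcount⟩ := h
  induction L generalizing u with
  | nil => simp only [List.prod_nil, mul_one] at hprod; subst hprod; exact Finset.Subset.refl _
  | cons s L ih =>
    obtain ⟨j, hj1, rfl⟩ := hform s List.mem_cons_self
    set j' : Fin n := ⟨(j : ℕ) + 1, hj1⟩ with hj'def
    have hj : (j : ℕ) + 1 = (j' : ℕ) := rfl
    have h1 : invCount (u * Equiv.swap j j') = invCount u + 1 := by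
      have := hcount 1 (by simp)
      simpa using this
    have hab : u j < u j' := by
      rcases lt_trichotomy (u j) (u j') with h' | h' | h'
      · exact h'
      · exfalso
        have := congrArg Fin.val (u.injective h')
        omega
      · exfalso
        have := invCount_mul_swap' hj h'
        omega
    have hsub1 : invPairs u ⊆ invPairs (u * Equiv.swap j j') := by
      rw [invPairs_mul_swap hj hab]
      exact Finset.subset_insert _ _
    refine hsub1.trans (ih (u := u * Equiv.swap j j') ?_ ?_ ?_)
    · exact fun s hs => hform s (List.mem_cons_of_mem _ hs)
    · rw [hprod, List.prod_cons, mul_assoc]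
    · intro k hk
      have h5 := hcount (k + 1) (by simpa using hk)
      rw [List.take_succ_cons, List.prod_cons, ← mul_assoc] at h5
      omega

theorem rightWeakLE_iff_subset {u v : Equiv.Perm (Fin n)} :
    rightWeakLE u v ↔ invPairs u ⊆ invPairs v := by
  constructor
  · exact subset_of_rightWeakLE
  · intro h
    exact rightWeakLE_of_subset (invPairs v).card u h (by omega)

end WeakOrder


theorem greedy_fiber_eq_rightWeak_interval' {n : ℕ} (w u : Equiv.Perm (Fin n))
    (hu : bruhatLE u w) :
    ∃! uw : Equiv.Perm (Fin n),
      {v : Equiv.Perm (Fin n) | GreedyRel w v u} =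
        {x : Equiv.Perm (Fin n) | rightWeakLE u x ∧ rightWeakLE x uw} := by
  obtain ⟨uw, huw⟩ := exists_uw (w := w) (u := u) hu
  have huwinv : ∀ a b : Fin n, (a, b) ∈ invPairs uw ↔ (a < b ∧ ¬ TGr w u a b) := by
    intro a b
    rw [mem_invPairs]
    constructor
    · rintro ⟨hab, hlt⟩
      refine ⟨hab, ?_⟩
      have hltp : ltp w u b a := (huw b a).mp hlt
      rcases hltp with h | ⟨h1, h2, h3⟩
      · exact fun h' => tg_irrefl a (tg_trans h' h)
      · exact h2
    · rintro ⟨hab, hntg⟩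
      refine ⟨hab, (huw b a).mpr ?_⟩
      by_cases h : TGr w u b a
      · exact Or.inl h
      · exact Or.inr ⟨h, hntg, hab⟩
  have hmain : ∀ v : Equiv.Perm (Fin n),
      GreedyRel w v u ↔ (invPairs u ⊆ invPairs v ∧ invPairs v ⊆ invPairs uw) := by
    intro v
    rw [greedy_iff_Fcond hu]
    constructor
    · intro hC
      constructor
      · intro p hp
        obtain ⟨a, b⟩ := p
        rw [mem_invPairs] at hp ⊢
        refine ⟨hp.1, ?_⟩
        exact Fcond_tg hC (Relation.TransGen.single (Prel_of_lt hu hp.1 hp.2))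
      · intro p hp
        obtain ⟨a, b⟩ := p
        rw [mem_invPairs] at hp
        rw [huwinv]
        refine ⟨hp.1, ?_⟩
        intro htg
        exact absurd (Fcond_tg hC htg) (lt_asymm hp.2)
    · rintro ⟨h1, h2⟩ b a hP
      have hba : b ≠ a := fun h => lt_irrefl _ (h ▸ hP.1)
      rcases lt_or_gt_of_ne hba with hlt | hgt
      · have hnuw : (b, a) ∉ invPairs uw := by
          rw [huwinv]
          rintro ⟨-, hn⟩
          exact hn (Relation.TransGen.single hP)
        have hnv : (b, a) ∉ invPairs v := fun h => hnuw (h2 h)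
        rw [mem_invPairs] at hnv
        push_neg at hnv
        have hle : v.symm b ≤ v.symm a := hnv hlt
        rcases lt_or_eq_of_le hle with h | h
        · exact h
        · exact absurd (v.symm.injective h) hba
      · have hmem : (a, b) ∈ invPairs u := mem_invPairs.mpr ⟨hgt, hP.1⟩
        exact (mem_invPairs.mp (h1 hmem)).2
  have hufib : GreedyRel w u u := (greedy_iff_Fcond hu).mpr (Fcond_self hu)
  have huwfib : GreedyRel w uw u := by
    rw [hmain]
    refine ⟨?_, Finset.Subset.refl _⟩
    intro p hp
    obtain ⟨a, b⟩ := p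
    rw [mem_invPairs] at hp
    rw [huwinv]
    exact ⟨hp.1, fun htg => lt_asymm (tg_pos htg) hp.2⟩
  refine ⟨uw, ?_, ?_⟩
  · ext v
    simp only [Set.mem_setOf_eq]
    rw [hmain v, rightWeakLE_iff_subset, rightWeakLE_iff_subset]
  · intro y hy
    have h1 : rightWeakLE uw y := ((Set.ext_iff.mp hy uw).mp huwfib).2
    have h2 : rightWeakLE u y := ((Set.ext_iff.mp hy u).mp hufib).2
    have hrefl : rightWeakLE y y := rightWeakLE_iff_subset.mpr (Finset.Subset.refl _)
    have hyfib : GreedyRel w y u := (Set.ext_iff.mp hy y).mpr ⟨h2, hrefl⟩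
    have h3 : invPairs y ⊆ invPairs uw := ((hmain y).mp hyfib).2
    exact eq_of_invPairs_subset_of_subset h3 (rightWeakLE_iff_subset.mp h1)

/-- For every `u ≤ w` in Bruhat order, the fiber `{v : v' = u}` of the greedy
operation is a right weak order interval `[u, u_w]_R` for a unique `u_w ∈ Sₙ`. -/
theorem greedy_fiber_eq_rightWeak_interval {n : ℕ} (w u : Equiv.Perm (Fin n))
    (hu : bruhatLE u w) :
    ∃! uw : Equiv.Perm (Fin n),
      {v : Equiv.Perm (Fin n) | GreedyRel w v u} =
        {x : Equiv.Perm (Fin n) | rightWeakLE u x ∧ rightWeakLE x uw} :=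
  greedy_fiber_eq_rightWeak_interval' w u hu
end SchubertToric
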